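/- For any word X over the alphabet Ψ and any natural number n: if the image of X·t^n in the algebra H is 0, then the image of X in H is 0; and if the image of s^n·X in H is 0, then the image of X in H is 0. -/

import Mathlib

noncomputable section

/-- Direction of the head movement of the Turing machine. -/
inductive Dir
  | L
  | R
deriving DecidableEq

/-- The instruction table of Minsky's universal Turing machine: for a state `i` and a color `j`,
`instr i j` is `some (d, q, p)` where `d` is the direction of the head movement, `q` the new
state and `p` the new color of the current cell; it is `none` exactly for the STOP pair
`(4, 3)`. -/
def instr : Fin 7 → Fin 4 → Option (Dir × Fin 7 × Fin 4) := fun i j =>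
  match i.val, j.val with
  | 0, 0 => some (Dir.L, 4, 1)
  | 0, 1 => some (Dir.L, 1, 3)
  | 0, 2 => some (Dir.R, 0, 0)
  | 0, 3 => some (Dir.R, 0, 1)
  | 1, 0 => some (Dir.L, 1, 2)
  | 1, 1 => some (Dir.L, 1, 3)
  | 1, 2 => some (Dir.R, 0, 0)
  | 1, 3 => some (Dir.L, 1, 3)
  | 2, 0 => some (Dir.R, 2, 2)
  | 2, 1 => some (Dir.R, 2, 1)
  | 2, 2 => some (Dir.R, 2, 0)
  | 2, 3 => some (Dir.L, 4, 1)
  | 3, 0 => some (Dir.R, 3, 2)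
  | 3, 1 => some (Dir.R, 3, 1)
  | 3, 2 => some (Dir.R, 3, 0)
  | 3, 3 => some (Dir.L, 4, 0)
  | 4, 0 => some (Dir.L, 5, 2)
  | 4, 1 => some (Dir.L, 4, 1)
  | 4, 2 => some (Dir.L, 4, 0)
  | 4, 3 => none
  | 5, 0 => some (Dir.L, 5, 2)
  | 5, 1 => some (Dir.L, 5, 1)
  | 5, 2 => some (Dir.L, 6, 2)
  | 5, 3 => some (Dir.R, 2, 1)
  | 6, 0 => some (Dir.R, 0, 3)
  | 6, 1 => some (Dir.R, 6, 3)
  | 6, 2 => some (Dir.R, 6, 2)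
  | 6, 3 => some (Dir.R, 3, 1)
  | _, _ => none

/-- The alphabet `Ψ = {t, s, a_0, …, a_3, Q_0, …, Q_6, P_0, …, P_3, L, R}`. -/
inductive Psi
  | t
  | s
  | a (k : Fin 4)
  | Q (i : Fin 7)
  | P (j : Fin 4)
  | L
  | R
deriving DecidableEq, Fintype

/-- The image in the free algebra of a word over the alphabet `Ψ`. -/
def wrd (K : Type*) [Field K] (l : List Psi) : FreeAlgebra K Psi :=
  (l.map (FreeAlgebra.ι K)).prod

open Psi in
/-- The defining relations of the algebra `H`. -/
inductive HRel (K : Type*) [Field K] : FreeAlgebra K Psi → FreeAlgebra K Psi → Prop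
  | rel1 (k : Fin 4) :
      HRel K (wrd K [t, L, a k]) (wrd K [L, t, a k])
  | rel2 (k l : Fin 4) :
      HRel K (wrd K [t, a k, a l]) (wrd K [a k, t, a l])
  | rel9 :
      HRel K (wrd K [s, R]) (wrd K [R, s])
  | rel8 (k : Fin 4) :
      HRel K (wrd K [s, a k]) (wrd K [a k, s])
  | rel3 (i : Fin 7) (j : Fin 4) (q : Fin 7) (p : Fin 4) (k : Fin 4)
      (h : instr i j = some (Dir.L, q, p)) :
      HRel K (wrd K [t, a k, Q i, P j]) (wrd K [Q q, P k, a p, s])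
  | rel5 (i : Fin 7) (j : Fin 4) (q : Fin 7) (p : Fin 4)
      (h : instr i j = some (Dir.L, q, p)) :
      HRel K (wrd K [t, L, Q i, P j]) (wrd K [L, Q q, P 0, a p, s])
  | rel4 (i : Fin 7) (j : Fin 4) (q : Fin 7) (p : Fin 4) (l k : Fin 4)
      (h : instr i j = some (Dir.R, q, p)) :
      HRel K (wrd K [t, a l, Q i, P j, a k]) (wrd K [a l, a p, Q q, P k, s])
  | rel4b (i : Fin 7) (j : Fin 4) (q : Fin 7) (p : Fin 4) (k : Fin 4)
      (h : instr i j = some (Dir.R, q, p)) :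
      HRel K (wrd K [t, L, Q i, P j, a k]) (wrd K [L, a p, Q q, P k, s])
  | rel6 (i : Fin 7) (j : Fin 4) (q : Fin 7) (p : Fin 4) (l : Fin 4)
      (h : instr i j = some (Dir.R, q, p)) :
      HRel K (wrd K [t, a l, Q i, P j, R]) (wrd K [a l, a p, Q q, P 0, R, s])
  | rel6b (i : Fin 7) (j : Fin 4) (q : Fin 7) (p : Fin 4)
      (h : instr i j = some (Dir.R, q, p)) :
      HRel K (wrd K [t, L, Q i, P j, R]) (wrd K [L, a p, Q q, P 0, R, s])
  | rel7 :
      HRel K (wrd K [Q 4, P 3]) 0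

/-- The algebra `H`: the quotient of the free associative unital `K`-algebra on `Ψ` by the
two-sided ideal generated by the defining relations. -/
abbrev AlgH (K : Type*) [Field K] := RingQuot (HRel K)

/-- The image in `H` of a word over the alphabet `Ψ`. -/
def mkw (K : Type*) [Field K] (l : List Psi) : AlgH K :=
  RingQuot.mkAlgHom K (HRel K) (wrd K l)

/-- The image of the letter `t` in `H`. -/
def tEl (K : Type*) [Field K] : AlgH K := mkw K [Psi.t]

/-- The image of the letter `s` in `H`. -/
def sEl (K : Type*) [Field K] : AlgH K := mkw K [Psi.s]

namespace Cancel12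

variable (K : Type*) [Field K]

open Psi

/-- Shorthand for the quotient map. -/
def mkA : FreeAlgebra K Psi →ₐ[K] AlgH K := RingQuot.mkAlgHom K (HRel K)

lemma wrd_nil : wrd K ([] : List Psi) = 1 := rfl

lemma wrd_cons (c : Psi) (l : List Psi) :
    wrd K (c :: l) = FreeAlgebra.ι K c * wrd K l := by
  simp [wrd]

lemma wrd_append (x y : List Psi) : wrd K (x ++ y) = wrd K x * wrd K y := by
  simp [wrd]

/-- The free algebra evaluated on free monoid words gives `wrd`. -/
lemma equiv_wrd (l : List Psi) :
    (FreeAlgebra.equivMonoidAlgebraFreeMonoid (R := K) (X := Psi)) (wrd K l)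
      = MonoidAlgebra.single (FreeMonoid.ofList l) 1 := by
  induction l with
  | nil =>
      rw [wrd_nil, map_one]
      exact MonoidAlgebra.one_def
  | cons c l ih =>
      rw [wrd_cons, map_mul, ih]
      have hc : (FreeAlgebra.equivMonoidAlgebraFreeMonoid (R := K) (X := Psi)) (FreeAlgebra.ι K c)
          = MonoidAlgebra.single (FreeMonoid.of c) 1 := by
        simp [FreeAlgebra.equivMonoidAlgebraFreeMonoid]
      rw [hc, MonoidAlgebra.single_mul_single, one_mul]
      rfl

lemma basis_wrd (m : FreeMonoid Psi) :
    FreeAlgebra.basisFreeMonoid K Psi m = wrd K m.toList := by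
  rw [FreeAlgebra.basisFreeMonoid, Module.Basis.map_apply]
  apply ((FreeAlgebra.equivMonoidAlgebraFreeMonoid (R := K) (X := Psi))).toLinearEquiv.symm_apply_eq.mpr
  have : FreeMonoid.ofList (FreeMonoid.toList m) = m := rfl
  rw [show (((FreeAlgebra.equivMonoidAlgebraFreeMonoid (R := K) (X := Psi))).toLinearEquiv) (wrd K m.toList)
      = (FreeAlgebra.equivMonoidAlgebraFreeMonoid (R := K) (X := Psi)) (wrd K m.toList) from rfl,
    equiv_wrd, this]
  simp

/-- Linear maps out of the free algebra agree if they agree on words. -/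
lemma lin_ext {M : Type*} [AddCommMonoid M] [Module K M]
    {f g : FreeAlgebra K Psi →ₗ[K] M}
    (h : ∀ l : List Psi, f (wrd K l) = g (wrd K l)) : f = g := by
  apply Module.Basis.ext (FreeAlgebra.basisFreeMonoid K Psi)
  intro m
  rw [basis_wrd]
  exact h m.toList

end Cancel12
namespace Cancel12

variable (K : Type*) [Field K]
open Psi

/-- Delete a trailing `t`, otherwise `0`. -/
def dT (l : List Psi) : FreeAlgebra K Psi :=
  if l.getLast? = some Psi.t then wrd K l.dropLast else 0

/-- Delete the leftmost `s` provided it is preceded only by letters `a _` or `R`. -/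
def sDel : List Psi → Option (List Psi)
  | [] => none
  | Psi.s :: w => some w
  | Psi.a k :: w => (sDel w).map (Psi.a k :: ·)
  | Psi.R :: w => (sDel w).map (Psi.R :: ·)
  | _ :: _ => none

def dS (l : List Psi) : FreeAlgebra K Psi := (sDel l).elim 0 (wrd K)

lemma dT_concat_t (l : List Psi) : dT K (l ++ [Psi.t]) = wrd K l := by
  rw [dT, if_pos List.getLast?_concat, List.dropLast_concat]

lemma dS_cons_s (l : List Psi) : dS K (Psi.s :: l) = wrd K l := rfl

/-- word-level key lemma for trailing-`t` deletion. -/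
lemma keyT {U V : List Psi} (hU : U ≠ []) (hV : V ≠ [])
    (hU' : U.getLast? ≠ some Psi.t) (hV' : V.getLast? ≠ some Psi.t)
    (hmk : mkA K (wrd K U) = mkA K (wrd K V)) (x y : List Psi) :
    mkA K (dT K (x ++ U ++ y)) = mkA K (dT K (x ++ V ++ y)) := by
  rcases y.eq_nil_or_concat' with rfl | ⟨y', c, rfl⟩
  · rw [dT, dT, if_neg, if_neg]
    · rw [List.append_nil, List.getLast?_append_of_ne_nil _ hV]; exact hV'
    · rw [List.append_nil, List.getLast?_append_of_ne_nil _ hU]; exact hU'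
  · by_cases hc : c = Psi.t
    · subst hc
      rw [dT, dT, show x ++ U ++ (y' ++ [Psi.t]) = (x ++ U ++ y') ++ [Psi.t] by
          simp [List.append_assoc],
        show x ++ V ++ (y' ++ [Psi.t]) = (x ++ V ++ y') ++ [Psi.t] by
          simp [List.append_assoc],
        if_pos List.getLast?_concat, if_pos List.getLast?_concat,
        List.dropLast_concat, List.dropLast_concat]
      rw [wrd_append, wrd_append, wrd_append, wrd_append, map_mul, map_mul,
        map_mul, map_mul, hmk]
    · rw [dT, dT, if_neg, if_neg]
      · rw [show x ++ V ++ (y' ++ [c]) = (x ++ V ++ y') ++ [c] by simp [List.append_assoc],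
          List.getLast?_concat]
        simpa using hc
      · rw [show x ++ U ++ (y' ++ [c]) = (x ++ U ++ y') ++ [c] by simp [List.append_assoc],
          List.getLast?_concat]
        simpa using hc

lemma keyT0 {U : List Psi} (hU : U ≠ []) (hU' : U.getLast? ≠ some Psi.t)
    (hmk : mkA K (wrd K U) = 0) (x y : List Psi) :
    mkA K (dT K (x ++ U ++ y)) = 0 := by
  rcases y.eq_nil_or_concat' with rfl | ⟨y', c, rfl⟩
  · rw [dT, if_neg, map_zero]
    rw [List.append_nil, List.getLast?_append_of_ne_nil _ hU]; exact hU'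
  · by_cases hc : c = Psi.t
    · subst hc
      rw [dT, show x ++ U ++ (y' ++ [Psi.t]) = (x ++ U ++ y') ++ [Psi.t] by
          simp [List.append_assoc],
        if_pos List.getLast?_concat, List.dropLast_concat]
      rw [wrd_append, wrd_append, map_mul, map_mul, hmk, mul_zero, zero_mul]
    · rw [dT, if_neg, map_zero]
      rw [show x ++ U ++ (y' ++ [c]) = (x ++ U ++ y') ++ [c] by simp [List.append_assoc],
        List.getLast?_concat]
      simpa using hc

/-- word-level key lemma for leading-`s` deletion. -/
lemma keyS {U V : List Psi}
    (hmk : mkA K (wrd K U) = mkA K (wrd K V))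
    (h0 : ∀ y, mkA K (dS K (U ++ y)) = mkA K (dS K (V ++ y)))
    (x y : List Psi) :
    mkA K (dS K (x ++ U ++ y)) = mkA K (dS K (x ++ V ++ y)) := by
  induction x generalizing y with
  | nil => simpa using h0 y
  | cons c x ih =>
      have hx : ∀ W : List Psi, (c :: x) ++ W ++ y = c :: (x ++ W ++ y) := by
        intro W; simp
      rw [hx, hx]
      cases c with
      | s =>
          rw [dS_cons_s, dS_cons_s, wrd_append, wrd_append, wrd_append, wrd_append,
            map_mul, map_mul, map_mul, map_mul, hmk]
      | a k =>
          have h1 : ∀ W : List Psi, mkA K (dS K (Psi.a k :: W))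
              = mkA K (FreeAlgebra.ι K (Psi.a k)) * mkA K (dS K W) := by
            intro W
            rw [dS, dS, sDel]
            cases sDel W with
            | none => simp
            | some w' => simp [wrd_cons, map_mul]
          rw [h1, h1, ih]
      | R =>
          have h1 : ∀ W : List Psi, mkA K (dS K (Psi.R :: W))
              = mkA K (FreeAlgebra.ι K Psi.R) * mkA K (dS K W) := by
            intro W
            rw [dS, dS, sDel]
            cases sDel W with
            | none => simp
            | some w' => simp [wrd_cons, map_mul]
          rw [h1, h1, ih]
      | t => simp [dS, sDel]
      | L => simp [dS, sDel]
      | Q i => simp [dS, sDel]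
      | P j => simp [dS, sDel]

lemma keyS0 {U : List Psi}
    (hmk : mkA K (wrd K U) = 0)
    (h0 : ∀ y, mkA K (dS K (U ++ y)) = 0)
    (x y : List Psi) :
    mkA K (dS K (x ++ U ++ y)) = 0 := by
  induction x generalizing y with
  | nil => simpa using h0 y
  | cons c x ih =>
      have hx : (c :: x) ++ U ++ y = c :: (x ++ U ++ y) := by simp
      rw [hx]
      cases c with
      | s =>
          rw [dS_cons_s, wrd_append, wrd_append, map_mul, map_mul, hmk,
            mul_zero, zero_mul]
      | a k =>
          rw [dS, sDel]
          cases h : sDel (x ++ U ++ y) with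
          | none => simp
          | some w' =>
              have := ih (y := y)
              rw [dS, h] at this
              simp only [Option.map_some, Option.elim_some, wrd_cons, map_mul]
              rw [show (Option.elim (some w') (0 : FreeAlgebra K Psi) (wrd K)) = wrd K w'
                from rfl] at this
              simp [this]
      | R =>
          rw [dS, sDel]
          cases h : sDel (x ++ U ++ y) with
          | none => simp
          | some w' =>
              have := ih (y := y)
              rw [dS, h] at this
              simp only [Option.map_some, Option.elim_some, wrd_cons, map_mul]
              rw [show (Option.elim (some w') (0 : FreeAlgebra K Psi) (wrd K)) = wrd K w'
                from rfl] at this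
              simp [this]
      | t => simp [dS, sDel]
      | L => simp [dS, sDel]
      | Q i => simp [dS, sDel]
      | P j => simp [dS, sDel]

end Cancel12
namespace Cancel12

variable (K : Type*) [Field K]
open Psi

/-- Trailing-`t` deletion as a linear map. -/
def D : FreeAlgebra K Psi →ₗ[K] FreeAlgebra K Psi :=
  (FreeAlgebra.basisFreeMonoid K Psi).constr K (fun m => dT K m.toList)

/-- Leading-`s` deletion as a linear map. -/
def S : FreeAlgebra K Psi →ₗ[K] FreeAlgebra K Psi :=
  (FreeAlgebra.basisFreeMonoid K Psi).constr K (fun m => dS K m.toList)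

lemma D_wrd (l : List Psi) : D K (wrd K l) = dT K l := by
  have := Module.Basis.constr_basis (FreeAlgebra.basisFreeMonoid K Psi) K
    (fun m => dT K m.toList) (FreeMonoid.ofList l)
  rw [basis_wrd] at this
  exact this

lemma S_wrd (l : List Psi) : S K (wrd K l) = dS K l := by
  have := Module.Basis.constr_basis (FreeAlgebra.basisFreeMonoid K Psi) K
    (fun m => dS K m.toList) (FreeMonoid.ofList l)
  rw [basis_wrd] at this
  exact this

/-- Reduce a "sandwich" identity for a linear map to the case of words. -/
lemma bilin_red (F : FreeAlgebra K Psi →ₗ[K] AlgH K) (u v : FreeAlgebra K Psi)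
    (h : ∀ x y : List Psi, F (wrd K x * u * wrd K y) = F (wrd K x * v * wrd K y)) :
    ∀ a b : FreeAlgebra K Psi, F (a * u * b) = F (a * v * b) := by
  have h1 : ∀ (x : List Psi) (b : FreeAlgebra K Psi),
      F (wrd K x * u * b) = F (wrd K x * v * b) := by
    intro x
    have := lin_ext K (f := F ∘ₗ LinearMap.mulLeft K (wrd K x * u))
      (g := F ∘ₗ LinearMap.mulLeft K (wrd K x * v)) (fun y => h x y)
    intro b
    exact LinearMap.congr_fun this b
  intro a b
  have := lin_ext K (f := F ∘ₗ LinearMap.mulRight K (u * b))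
    (g := F ∘ₗ LinearMap.mulRight K (v * b))
    (fun x => by
      simpa [LinearMap.mulRight_apply, ← mul_assoc] using h1 x b)
  simpa [LinearMap.mulRight_apply, ← mul_assoc] using LinearMap.congr_fun this a

/-- The composite `mk ∘ D`. -/
def PhiT : FreeAlgebra K Psi →ₗ[K] AlgH K := (mkA K).toLinearMap ∘ₗ D K

def PhiS : FreeAlgebra K Psi →ₗ[K] AlgH K := (mkA K).toLinearMap ∘ₗ S K

lemma PhiT_wrd (l : List Psi) : PhiT K (wrd K l) = mkA K (dT K l) := by
  simp [PhiT, D_wrd]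

lemma PhiS_wrd (l : List Psi) : PhiS K (wrd K l) = mkA K (dS K l) := by
  simp [PhiS, S_wrd]

lemma hrel_mk {u v : FreeAlgebra K Psi} (h : HRel K u v) : mkA K u = mkA K v :=
  RingQuot.mkAlgHom_rel K h

/-- The sandwich identity for `PhiT` along every defining relation. -/
lemma mainT {u v : FreeAlgebra K Psi} (h : HRel K u v) :
    ∀ a b : FreeAlgebra K Psi, PhiT K (a * u * b) = PhiT K (a * v * b) := by
  have base : ∀ (U V : List Psi), U ≠ [] → V ≠ [] →
      U.getLast? ≠ some Psi.t → V.getLast? ≠ some Psi.t →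
      mkA K (wrd K U) = mkA K (wrd K V) →
      ∀ a b : FreeAlgebra K Psi, PhiT K (a * wrd K U * b) = PhiT K (a * wrd K V * b) := by
    intro U V hU hV hU' hV' hmk
    apply bilin_red
    intro x y
    rw [← wrd_append, ← wrd_append, ← wrd_append, ← wrd_append,
      PhiT_wrd, PhiT_wrd]
    exact keyT K hU hV hU' hV' hmk x y
  have base0 : ∀ (U : List Psi), U ≠ [] →
      U.getLast? ≠ some Psi.t →
      mkA K (wrd K U) = 0 →
      ∀ a b : FreeAlgebra K Psi, PhiT K (a * wrd K U * b) = PhiT K (a * 0 * b) := by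
    intro U hU hU' hmk
    apply bilin_red
    intro x y
    rw [← wrd_append, ← wrd_append, PhiT_wrd, mul_zero, zero_mul, map_zero]
    exact keyT0 K hU hU' hmk x y
  cases h with
  | rel1 k => exact base _ _ (by simp) (by simp) (by simp) (by simp) (hrel_mk K (HRel.rel1 k))
  | rel2 k l => exact base _ _ (by simp) (by simp) (by simp) (by simp) (hrel_mk K (HRel.rel2 k l))
  | rel9 => exact base _ _ (by simp) (by simp) (by simp) (by simp) (hrel_mk K HRel.rel9)
  | rel8 k => exact base _ _ (by simp) (by simp) (by simp) (by simp) (hrel_mk K (HRel.rel8 k))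
  | rel3 i j q p k hins =>
      exact base _ _ (by simp) (by simp) (by simp) (by simp)
        (hrel_mk K (HRel.rel3 i j q p k hins))
  | rel5 i j q p hins =>
      exact base _ _ (by simp) (by simp) (by simp) (by simp)
        (hrel_mk K (HRel.rel5 i j q p hins))
  | rel4 i j q p l k hins =>
      exact base _ _ (by simp) (by simp) (by simp) (by simp)
        (hrel_mk K (HRel.rel4 i j q p l k hins))
  | rel4b i j q p k hins =>
      exact base _ _ (by simp) (by simp) (by simp) (by simp)
        (hrel_mk K (HRel.rel4b i j q p k hins))
  | rel6 i j q p l hins =>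
      exact base _ _ (by simp) (by simp) (by simp) (by simp)
        (hrel_mk K (HRel.rel6 i j q p l hins))
  | rel6b i j q p hins =>
      exact base _ _ (by simp) (by simp) (by simp) (by simp)
        (hrel_mk K (HRel.rel6b i j q p hins))
  | rel7 =>
      exact base0 _ (by simp) (by simp) (by simpa using hrel_mk K HRel.rel7)

/-- The sandwich identity for `PhiS` along every defining relation. -/
lemma mainS {u v : FreeAlgebra K Psi} (h : HRel K u v) :
    ∀ a b : FreeAlgebra K Psi, PhiS K (a * u * b) = PhiS K (a * v * b) := by
  have base : ∀ (U V : List Psi),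
      mkA K (wrd K U) = mkA K (wrd K V) →
      (∀ y, mkA K (dS K (U ++ y)) = mkA K (dS K (V ++ y))) →
      ∀ a b : FreeAlgebra K Psi, PhiS K (a * wrd K U * b) = PhiS K (a * wrd K V * b) := by
    intro U V hmk h0
    apply bilin_red
    intro x y
    rw [← wrd_append, ← wrd_append, ← wrd_append, ← wrd_append,
      PhiS_wrd, PhiS_wrd]
    exact keyS K hmk h0 x y
  have base0 : ∀ (U : List Psi),
      mkA K (wrd K U) = 0 →
      (∀ y, mkA K (dS K (U ++ y)) = 0) →
      ∀ a b : FreeAlgebra K Psi, PhiS K (a * wrd K U * b) = PhiS K (a * 0 * b) := by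
    intro U hmk h0
    apply bilin_red
    intro x y
    rw [← wrd_append, ← wrd_append, PhiS_wrd, mul_zero, zero_mul, map_zero]
    exact keyS0 K hmk h0 x y
  cases h with
  | rel1 k =>
      exact base _ _ (hrel_mk K (HRel.rel1 k)) (fun y => by simp [dS, sDel]) 
  | rel2 k l =>
      exact base _ _ (hrel_mk K (HRel.rel2 k l)) (fun y => by simp [dS, sDel])
  | rel9 =>
      exact base _ _ (hrel_mk K HRel.rel9) (fun y => by simp [dS, sDel])
  | rel8 k =>
      exact base _ _ (hrel_mk K (HRel.rel8 k)) (fun y => by simp [dS, sDel])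
  | rel3 i j q p k hins =>
      exact base _ _ (hrel_mk K (HRel.rel3 i j q p k hins)) (fun y => by simp [dS, sDel])
  | rel5 i j q p hins =>
      exact base _ _ (hrel_mk K (HRel.rel5 i j q p hins)) (fun y => by simp [dS, sDel])
  | rel4 i j q p l k hins =>
      exact base _ _ (hrel_mk K (HRel.rel4 i j q p l k hins)) (fun y => by simp [dS, sDel])
  | rel4b i j q p k hins =>
      exact base _ _ (hrel_mk K (HRel.rel4b i j q p k hins)) (fun y => by simp [dS, sDel])
  | rel6 i j q p l hins =>
      exact base _ _ (hrel_mk K (HRel.rel6 i j q p l hins)) (fun y => by simp [dS, sDel])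
  | rel6b i j q p hins =>
      exact base _ _ (hrel_mk K (HRel.rel6b i j q p hins)) (fun y => by simp [dS, sDel])
  | rel7 =>
      exact base0 _ (by simpa using hrel_mk K HRel.rel7) (fun y => by simp [dS, sDel])

/-- Lift the sandwich identity along `RingQuot.Rel`. -/
lemma rel_lift (F : FreeAlgebra K Psi →ₗ[K] AlgH K)
    (hmain : ∀ {u v : FreeAlgebra K Psi}, HRel K u v →
      ∀ a b : FreeAlgebra K Psi, F (a * u * b) = F (a * v * b))
    {u v : FreeAlgebra K Psi} (h : RingQuot.Rel (HRel K) u v) :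
    ∀ a b : FreeAlgebra K Psi, F (a * u * b) = F (a * v * b) := by
  induction h with
  | of h => exact hmain h
  | @add_left u v c _ ih =>
      intro a b
      have e : ∀ w : FreeAlgebra K Psi, a * (w + c) * b = a * w * b + a * c * b := by
        intro w; noncomm_ring
      rw [e, e, map_add, map_add, ih a b]
  | @mul_left u v c _ ih =>
      intro a b
      rw [show a * (u * c) * b = a * u * (c * b) by noncomm_ring,
        show a * (v * c) * b = a * v * (c * b) by noncomm_ring]
      exact ih a (c * b)
  | @mul_right c u v _ ih =>
      intro a b
      rw [show a * (c * u) * b = (a * c) * u * b by noncomm_ring,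
        show a * (c * v) * b = (a * c) * v * b by noncomm_ring]
      exact ih (a * c) b

lemma eqv_lift (F : FreeAlgebra K Psi →ₗ[K] AlgH K)
    (hmain : ∀ {u v : FreeAlgebra K Psi}, HRel K u v →
      ∀ a b : FreeAlgebra K Psi, F (a * u * b) = F (a * v * b))
    {u v : FreeAlgebra K Psi}
    (h : Relation.EqvGen (RingQuot.Rel (HRel K)) u v) : F u = F v := by
  induction h with
  | rel u v h =>
      have := rel_lift K F hmain h 1 1
      simpa using this
  | refl => rfl
  | symm _ _ _ ih => exact ih.symm
  | trans _ _ _ _ _ ih1 ih2 => exact ih1.trans ih2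

lemma eqv_of_mk_zero {x : FreeAlgebra K Psi} (h : mkA K x = 0) :
    Relation.EqvGen (RingQuot.Rel (HRel K)) x 0 := by
  rw [← Quot.eq]
  have hc : RingQuot.mkRingHom (HRel K) x = mkA K x :=
    (DFunLike.congr_fun (RingQuot.mkAlgHom_coe K (HRel K)) x).symm
  have h' : RingQuot.mkRingHom (HRel K) x = RingQuot.mkRingHom (HRel K) 0 := by
    rw [hc, h, map_zero]
  rw [RingQuot.mkRingHom_def] at h'
  simp only [RingHom.coe_mk, MonoidHom.coe_mk, OneHom.coe_mk] at h'
  exact congrArg RingQuot.toQuot h'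

/-- Cancellation of one `t` on the right. -/
lemma cancel_t (X : List Psi) (h : mkw K (X ++ [Psi.t]) = 0) : mkw K X = 0 := by
  have h1 : mkA K (wrd K (X ++ [Psi.t])) = 0 := h
  have h2 := eqv_lift K (PhiT K) (fun h => mainT K h) (eqv_of_mk_zero K h1)
  rw [map_zero, PhiT_wrd, dT_concat_t] at h2
  exact h2

/-- Cancellation of one `s` on the left. -/
lemma cancel_s (X : List Psi) (h : mkw K (Psi.s :: X) = 0) : mkw K X = 0 := by
  have h1 : mkA K (wrd K (Psi.s :: X)) = 0 := h
  have h2 := eqv_lift K (PhiS K) (fun h => mainS K h) (eqv_of_mk_zero K h1)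
  rw [map_zero, PhiS_wrd, dS_cons_s] at h2
  exact h2

end Cancel12
/-- For any word `X` over `Ψ` and any natural number `n`: if the image of
`X·t^n` in `H` is `0` then the image of `X` in `H` is `0`; and if the image of `s^n·X` in `H`
is `0` then the image of `X` in `H` is `0`. -/
theorem cancel_tn_right_sn_left (K : Type*) [Field K] (X : List Psi) (n : ℕ) :
    (mkw K (X ++ List.replicate n Psi.t) = 0 → mkw K X = 0) ∧
    (mkw K (List.replicate n Psi.s ++ X) = 0 → mkw K X = 0) := by
  constructor
  · induction n with
    | zero => intro h; simpa using h
    | succ n ih =>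
        intro h
        apply ih
        apply Cancel12.cancel_t K
        rw [show (X ++ List.replicate n Psi.t) ++ [Psi.t]
            = X ++ List.replicate (n + 1) Psi.t by
          rw [List.append_assoc, ← List.replicate_succ']]
        exact h
  · induction n with
    | zero => intro h; simpa using h
    | succ n ih =>
        intro h
        apply ih
        apply Cancel12.cancel_s K
        rw [show Psi.s :: (List.replicate n Psi.s ++ X)
            = List.replicate (n + 1) Psi.s ++ X by
          simp [List.replicate_succ]]
        exact h
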